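/- Pointwise energy inequality with equality characterization: for every μ ∈ ℂ with |μ| < 1 and all vectors a = (a₁, a₂), b = (b₁, b₂) ∈ ℝ², with P = P(μ) and J = [[0, −1], [1, 0]], one has (1/2)‖P·a‖² + (1/2)‖P·b‖² ≥ a₁·b₂ − a₂·b₁, with equality if and only if P·a + J·P·b = 0. -/

import Mathlib

noncomputable def Pmat (μ : ℂ) : Matrix (Fin 2) (Fin 2) ℝ :=
  (1 / Real.sqrt (1 - ‖μ‖ ^ 2)) •
    !![1 - μ.re, -μ.im; -μ.im, 1 + μ.re]

def Jmat : Matrix (Fin 2) (Fin 2) ℝ := !![0, -1; 1, 0]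

noncomputable def toE2 (w : Fin 2 → ℝ) : EuclideanSpace ℝ (Fin 2) := WithLp.toLp 2 w

lemma jmul_aux (w : Fin 2 → ℝ) : Jmat.mulVec w = ![-(w 1), w 0] := by
  funext i; fin_cases i <;>
    simp [Jmat, Matrix.mulVec, dotProduct, Fin.sum_univ_two, Matrix.vecHead, Matrix.vecTail]

lemma normsq_toE2 (w : Fin 2 → ℝ) : ‖toE2 w‖ ^ 2 = w 0 ^ 2 + w 1 ^ 2 := by
  rw [toE2, EuclideanSpace.norm_eq, Real.sq_sqrt (by positivity)]
  simp [Fin.sum_univ_two, sq_abs]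

set_option maxHeartbeats 1000000 in
/-- Pointwise energy inequality with equality characterization: for `|μ| < 1`,
`P = P(μ)`, `J = [[0,−1],[1,0]]` and all `a, b ∈ ℝ²`,
`(1/2)‖P·a‖² + (1/2)‖P·b‖² ≥ a₁·b₂ − a₂·b₁`, with equality iff `P·a + J·P·b = 0`. -/
theorem pointwise_energy_inequality (μ : ℂ) (hμ : ‖μ‖ < 1) (a b : Fin 2 → ℝ) :
    a 0 * b 1 - a 1 * b 0 ≤
      (1 / 2) * ‖toE2 ((Pmat μ).mulVec a)‖ ^ 2
        + (1 / 2) * ‖toE2 ((Pmat μ).mulVec b)‖ ^ 2 ∧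
    ((1 / 2) * ‖toE2 ((Pmat μ).mulVec a)‖ ^ 2
        + (1 / 2) * ‖toE2 ((Pmat μ).mulVec b)‖ ^ 2 = a 0 * b 1 - a 1 * b 0 ↔
      (Pmat μ).mulVec a + Jmat.mulVec ((Pmat μ).mulVec b) = 0) := by
  have habs : (0:ℝ) ≤ ‖μ‖ := norm_nonneg μ
  have hs : 0 < 1 - ‖μ‖ ^ 2 := by nlinarith
  have hc2 : (1 / Real.sqrt (1 - ‖μ‖ ^ 2)) ^ 2 * (1 - ‖μ‖ ^ 2) = 1 := by
    rw [div_pow, Real.sq_sqrt hs.le]; field_simp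
  have habs2 : ‖μ‖ ^ 2 = μ.re ^ 2 + μ.im ^ 2 := by
    rw [Complex.sq_norm, Complex.normSq_apply]; ring
  obtain ⟨c, hc⟩ : ∃ x, 1 / Real.sqrt (1 - ‖μ‖ ^ 2) = x := ⟨_, rfl⟩
  rw [hc] at hc2
  rw [habs2] at hc2
  have eu0 : (Pmat μ).mulVec a 0 = c * ((1 - μ.re) * a 0 + (-μ.im) * a 1) := by
    simp [Pmat, Matrix.mulVec, dotProduct, Fin.sum_univ_two, hc]; ring
  have eu1 : (Pmat μ).mulVec a 1 = c * ((-μ.im) * a 0 + (1 + μ.re) * a 1) := by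
    simp [Pmat, Matrix.mulVec, dotProduct, Fin.sum_univ_two, hc]; ring
  have ev0 : (Pmat μ).mulVec b 0 = c * ((1 - μ.re) * b 0 + (-μ.im) * b 1) := by
    simp [Pmat, Matrix.mulVec, dotProduct, Fin.sum_univ_two, hc]; ring
  have ev1 : (Pmat μ).mulVec b 1 = c * ((-μ.im) * b 0 + (1 + μ.re) * b 1) := by
    simp [Pmat, Matrix.mulVec, dotProduct, Fin.sum_univ_two, hc]; ring
  obtain ⟨u0, hu0⟩ : ∃ x, (Pmat μ).mulVec a 0 = x := ⟨_, rfl⟩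
  obtain ⟨u1, hu1⟩ : ∃ x, (Pmat μ).mulVec a 1 = x := ⟨_, rfl⟩
  obtain ⟨v0, hv0⟩ : ∃ x, (Pmat μ).mulVec b 0 = x := ⟨_, rfl⟩
  obtain ⟨v1, hv1⟩ : ∃ x, (Pmat μ).mulVec b 1 = x := ⟨_, rfl⟩
  rw [hu0] at eu0; rw [hu1] at eu1; rw [hv0] at ev0; rw [hv1] at ev1
  have hdet : u0 * v1 - u1 * v0 = a 0 * b 1 - a 1 * b 0 := by
    rw [eu0, eu1, ev0, ev1]
    linear_combination (a 0 * b 1 - a 1 * b 0) * hc2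
  have hkey : (1 / 2) * ‖toE2 ((Pmat μ).mulVec a)‖ ^ 2
        + (1 / 2) * ‖toE2 ((Pmat μ).mulVec b)‖ ^ 2 - (a 0 * b 1 - a 1 * b 0)
      = (1/2) * ((u0 - v1) ^ 2 + (u1 + v0) ^ 2) := by
    rw [normsq_toE2, normsq_toE2, hu0, hu1, hv0, hv1, ← hdet]; ring
  have hJ : Jmat.mulVec ((Pmat μ).mulVec b) = ![-v1, v0] := by
    rw [jmul_aux, hv0, hv1]
  have hw0 : ((Pmat μ).mulVec a + Jmat.mulVec ((Pmat μ).mulVec b)) 0 = u0 - v1 := by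
    rw [Pi.add_apply, hJ, hu0]; simp; ring
  have hw1 : ((Pmat μ).mulVec a + Jmat.mulVec ((Pmat μ).mulVec b)) 1 = u1 + v0 := by
    rw [Pi.add_apply, hJ, hu1]; simp
  have hpos : 0 ≤ (u0 - v1) ^ 2 + (u1 + v0) ^ 2 := by positivity
  refine ⟨by linarith, ?_, ?_⟩
  · intro h
    have h0 : (u0 - v1) ^ 2 + (u1 + v0) ^ 2 = 0 := by linarith
    obtain ⟨h1, h2⟩ := (add_eq_zero_iff_of_nonneg (sq_nonneg _) (sq_nonneg _)).mp h0
    have h1' : u0 - v1 = 0 := by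
      exact pow_eq_zero_iff (two_ne_zero) |>.mp h1
    have h2' : u1 + v0 = 0 := by
      exact pow_eq_zero_iff (two_ne_zero) |>.mp h2
    funext i
    fin_cases i
    · show ((Pmat μ).mulVec a + Jmat.mulVec ((Pmat μ).mulVec b)) 0 = 0
      rw [hw0]; exact h1'
    · show ((Pmat μ).mulVec a + Jmat.mulVec ((Pmat μ).mulVec b)) 1 = 0
      rw [hw1]; exact h2'
  · intro h
    have h1 : u0 - v1 = 0 := by rw [← hw0, h]; rfl
    have h2 : u1 + v0 = 0 := by rw [← hw1, h]; rfl
    rw [h1, h2] at hkey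
    linarith [hkey]
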